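/- There exists a universal constant c > 0 such that for every finite nonempty alphabet Σ, every stochastic language P over Σ, every ε > 0, every δ ∈ (0,1), and every integer n ≥ (c²/ε²)·(2 − log(δ/4)), the μ-measure of the set {ω ∈ Ω : for every w ∈ Σ*, |P_{ω,n}(wΣ*) − P(wΣ*)| ≤ ε} is greater than 1 − δ (log denotes the natural logarithm). -/

import Mathlib

open scoped BigOperators
open MeasureTheory

/-- A stochastic language over the alphabet `A`: a nonnegative real-valued function on
words whose values are summable with sum `1`. -/
def IsStochastic {A : Type*} (p : List A → ℝ) : Prop :=
  (∀ w, 0 ≤ p w) ∧ HasSum p 1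

/-- `pre w` is the set `wΣ*` of words having `w` as a prefix. -/
def pre {A : Type*} (w : List A) : Set (List A) := {v | w <+: v}

/-- The residualLang language `u⁻¹P` of `P` with respect to the word `u`. -/
noncomputable def residualLang {A : Type*} (P : List A → ℝ) (u w : List A) : ℝ :=
  P (u ++ w) / ∑' v : pre u, P (v : List A)

/-- The empirical probability of the set `X` among the first `m` samples of `ω`. -/
noncomputable def emp {A : Type*} (ω : ℕ → List A) (m : ℕ) (X : Set (List A)) : ℝ :=
  (∑ i ∈ Finset.range m, X.indicator (fun _ => (1 : ℝ)) (ω i)) / m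

/-- `x` is a solution of the system `I({u 0, …, u (n-1)}, v, ω, m, ε)`. -/
def IsSolution {A : Type*} {n : ℕ} (u : Fin n → List A) (v : List A)
    (ω : ℕ → List A) (m : ℕ) (ε : ℝ) (x : Fin n → ℝ) : Prop :=
  (∑ i, x i = 1) ∧
    ∀ w : List A, (∃ i < m, w <:+: ω i) →
      |emp ω m (pre (v ++ w)) / emp ω m (pre v) -
          ∑ i, x i * (emp ω m (pre (u i ++ w)) / emp ω m (pre (u i)))| ≤ ε

/-- Words over a countable alphabet carry the discrete (full) σ-algebra. -/
instance listMeasurableSpace {A : Type*} : MeasurableSpace (List A) := ⊤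

/-- `μ` is the infinite i.i.d. product of the law on `List A` given by `P`:
its finite-dimensional cylinder probabilities are the corresponding products. -/
def IsIIDProduct {A : Type*} (P : List A → ℝ) (μ : Measure (ℕ → List A)) : Prop :=
  ∀ (s : Finset ℕ) (E : ℕ → Set (List A)),
    μ {ω | ∀ i ∈ s, ω i ∈ E i} = ∏ i ∈ s, ∑' w : E i, ENNReal.ofReal (P (w : List A))


set_option linter.unusedSectionVars false
open scoped ENNReal

namespace S19

variable {A : Type} [Fintype A] [Nonempty A]

noncomputable def dig (a : A) : ℝ := ((Fintype.equivFin A a : ℕ) : ℝ)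

noncomputable def bb (A : Type) [Fintype A] : ℝ := (Fintype.card A : ℝ) + 1

lemma bb_ge_two : (2:ℝ) ≤ bb A := by
  have : 1 ≤ Fintype.card A := Fintype.card_pos
  unfold bb
  have : (1:ℝ) ≤ (Fintype.card A : ℝ) := by exact_mod_cast this
  linarith

lemma bb_pos : (0:ℝ) < bb A := lt_of_lt_of_le (by norm_num) bb_ge_two

lemma dig_nonneg (a : A) : 0 ≤ dig a := Nat.cast_nonneg _

lemma dig_add_two_le (a : A) : dig a + 2 ≤ bb A := by
  have h2 : ((Fintype.equivFin A a : ℕ) : ℝ) + 1 ≤ (Fintype.card A : ℝ) := by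
    have := (Fintype.equivFin A a).isLt
    exact_mod_cast Nat.succ_le_of_lt this
  unfold dig bb
  linarith

lemma dig_inj {a c : A} (h : dig a = dig c) : a = c := by
  unfold dig at h
  have h2 : (Fintype.equivFin A a : Fin (Fintype.card A)) = Fintype.equivFin A c := by
    apply Fin.ext
    exact_mod_cast h
  exact (Fintype.equivFin A).injective h2

noncomputable def enc : List A → ℝ
  | [] => 0
  | a :: t => (dig a + 1 + enc t) / bb A

lemma enc_nil : enc ([] : List A) = 0 := rfl

lemma enc_cons (a : A) (t : List A) : enc (a :: t) = (dig a + 1 + enc t) / bb A := rfl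

lemma enc_nonneg (t : List A) : 0 ≤ enc t := by
  induction t with
  | nil => simp [enc_nil]
  | cons a t ih =>
    rw [enc_cons]
    have h1 := dig_nonneg a
    exact div_nonneg (by linarith) (le_of_lt bb_pos)

lemma enc_le (t : List A) : enc t ≤ 1 - (1 / bb A) ^ t.length := by
  induction t with
  | nil => simp [enc_nil]
  | cons a t ih =>
    rw [enc_cons, List.length_cons]
    have hb := bb_pos (A := A)
    have hd := dig_add_two_le a
    rw [div_le_iff₀ hb]
    have hkey : (1 - (1 / bb A) ^ (t.length + 1)) * bb A = bb A - (1 / bb A) ^ t.length := by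
      rw [pow_succ]
      field_simp
    rw [hkey]
    linarith

lemma enc_lt_one (t : List A) : enc t < 1 := by
  have h := enc_le t
  have : (0:ℝ) < (1 / bb A) ^ t.length := by
    have hb := bb_pos (A := A)
    positivity
  linarith

lemma enc_append (w u : List A) : enc (w ++ u) = enc w + (1 / bb A) ^ w.length * enc u := by
  induction w with
  | nil => simp [enc_nil]
  | cons a t ih =>
    have hb := bb_pos (A := A)
    simp only [List.cons_append, enc_cons, ih, List.length_cons]
    rw [pow_succ]
    field_simp
    ring

lemma enc_nonprefix (w : List A) : ∀ v : List A, ¬ w <+: v → enc w ≤ enc v →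
    enc w + (1 / bb A) ^ w.length ≤ enc v := by
  induction w with
  | nil => intro v hnp _; exact absurd List.nil_prefix hnp
  | cons a w' ih =>
    intro v hnp hle
    have hb := bb_pos (A := A)
    match v with
    | [] =>
      exfalso
      have h0 : (0:ℝ) < enc (a :: w') := by
        rw [enc_cons]
        have := dig_nonneg a
        have := enc_nonneg w'
        apply div_pos (by linarith) hb
      rw [enc_nil] at hle
      linarith
    | c :: v' =>
      have hx := enc_le w'
      have hy := enc_nonneg v'
      have hy1 := enc_lt_one v'
      have hx0 := enc_nonneg w'
      have hcomb : enc (a :: w') + (1 / bb A) ^ (a :: w').length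
          = (dig a + 1 + enc w' + (1 / bb A) ^ w'.length) / bb A := by
        rw [enc_cons, List.length_cons, pow_succ]
        field_simp
      rcases lt_trichotomy (dig a) (dig c) with hlt | heq | hgt
      · have hstep : dig a + 1 ≤ dig c := by
          unfold dig at hlt ⊢
          have h : (Fintype.equivFin A a : ℕ) < (Fintype.equivFin A c : ℕ) := by exact_mod_cast hlt
          exact_mod_cast Nat.succ_le_of_lt h
        rw [hcomb, enc_cons]
        apply (div_le_div_iff₀ hb hb).mpr
        exact mul_le_mul_of_nonneg_right (by linarith) hb.le
      · have hac : a = c := dig_inj heq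
        subst hac
        have hnp' : ¬ w' <+: v' := by
          intro h
          exact hnp (List.cons_prefix_cons.mpr ⟨rfl, h⟩)
        have hle' : enc w' ≤ enc v' := by
          rw [enc_cons, enc_cons, div_le_div_iff₀ hb hb] at hle
          have := le_of_mul_le_mul_right hle hb
          linarith
        have := ih v' hnp' hle'
        rw [hcomb, enc_cons]
        apply (div_le_div_iff₀ hb hb).mpr
        exact mul_le_mul_of_nonneg_right (by linarith) hb.le
      · exfalso
        have hstep : dig c + 1 ≤ dig a := by
          unfold dig at hgt ⊢
          have h : (Fintype.equivFin A c : ℕ) < (Fintype.equivFin A a : ℕ) := by exact_mod_cast hgt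
          exact_mod_cast Nat.succ_le_of_lt h
        rw [enc_cons, enc_cons, div_le_div_iff₀ hb hb] at hle
        have := le_of_mul_le_mul_right hle hb
        linarith

/-- `pre w` (written with mathlib prefix) as a difference of two "up-sets" of `enc`. -/
lemma prefix_iff_enc (w v : List A) :
    w <+: v ↔ (enc w ≤ enc v ∧ ¬ (enc w + (1 / bb A) ^ w.length ≤ enc v)) := by
  constructor
  · rintro ⟨u, rfl⟩
    have h1 : enc (w ++ u) = enc w + (1 / bb A) ^ w.length * enc u := enc_append w u
    have hu0 := enc_nonneg u
    have hu1 := enc_lt_one u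
    have hp : (0:ℝ) < (1 / bb A) ^ w.length := by
      have hb := bb_pos (A := A)
      positivity
    constructor
    · nlinarith
    · intro hcon
      nlinarith
  · rintro ⟨h1, h2⟩
    by_contra hnp
    exact h2 (enc_nonprefix w v hnp h1)

section Measure

variable (P : List A → ℝ)

lemma meas_all {α : Type*} [MeasurableSpace α] (h : ‹MeasurableSpace α› = ⊤) (s : Set α) :
    MeasurableSet s := by subst h; trivial

lemma measAll (s : Set (List A)) : MeasurableSet s := trivial

/-- The discrete measure on words given by `P`. -/
noncomputable def rho : Measure (List A) :=
  Measure.sum (fun x => (ENNReal.ofReal (P x)) • Measure.dirac x)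

lemma rho_apply (s : Set (List A)) :
    rho P s = ∑' x, Set.indicator s (fun x => ENNReal.ofReal (P x)) x := by
  rw [rho, Measure.sum_apply _ (measAll s)]
  congr 1
  ext x
  rw [Measure.smul_apply, Measure.dirac_apply' _ (measAll s)]
  by_cases hx : x ∈ s <;> simp [hx]

lemma rho_apply' (s : Set (List A)) :
    rho P s = ∑' x : s, ENNReal.ofReal (P x) := by
  rw [rho_apply]
  exact (tsum_subtype s _).symm

lemma rho_singleton (x : List A) : rho P {x} = ENNReal.ofReal (P x) := by
  rw [rho_apply]
  rw [tsum_eq_single x]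
  · simp
  · intro y hy
    simp [Set.indicator_apply, hy]

lemma rho_univ (hP : IsStochastic P) : rho P Set.univ = 1 := by
  rw [rho_apply]
  simp only [Set.indicator_univ]
  rw [← ENNReal.ofReal_tsum_of_nonneg hP.1 hP.2.summable, hP.2.tsum_eq]
  simp

lemma rho_isProb (hP : IsStochastic P) : IsProbabilityMeasure (rho P) := ⟨rho_univ P hP⟩

lemma rho_le_one (hP : IsStochastic P) (s : Set (List A)) : rho P s ≤ 1 := by
  have := rho_isProb P hP
  exact prob_le_one

lemma rho_ne_top (hP : IsStochastic P) (s : Set (List A)) : rho P s ≠ ⊤ :=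
  ne_top_of_le_ne_top ENNReal.one_ne_top (rho_le_one P hP s)

/-- Real-valued mass. -/
noncomputable def mass (s : Set (List A)) : ℝ := (rho P s).toReal

lemma mass_nonneg (s : Set (List A)) : 0 ≤ mass P s := ENNReal.toReal_nonneg

lemma mass_le_one (hP : IsStochastic P) (s : Set (List A)) : mass P s ≤ 1 := by
  have h := rho_le_one P hP s
  unfold mass
  calc (rho P s).toReal ≤ (1 : ℝ≥0∞).toReal := ENNReal.toReal_mono ENNReal.one_ne_top h
  _ = 1 := by simp

lemma mass_mono (hP : IsStochastic P) {s t : Set (List A)} (h : s ⊆ t) : mass P s ≤ mass P t :=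
  ENNReal.toReal_mono (rho_ne_top P hP t) (measure_mono h)

lemma mass_univ (hP : IsStochastic P) : mass P Set.univ = 1 := by
  unfold mass; rw [rho_univ P hP]; simp

lemma rho_eq_ofReal_mass (hP : IsStochastic P) (s : Set (List A)) :
    rho P s = ENNReal.ofReal (mass P s) := by
  unfold mass
  rw [ENNReal.ofReal_toReal (rho_ne_top P hP s)]

lemma mass_le_iff (hP : IsStochastic P) {s t : Set (List A)} :
    mass P s ≤ mass P t ↔ rho P s ≤ rho P t := by
  unfold mass
  rw [ENNReal.toReal_le_toReal (rho_ne_top P hP s) (rho_ne_top P hP t)]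

lemma mass_compl (hP : IsStochastic P) (s : Set (List A)) :
    mass P sᶜ = 1 - mass P s := by
  have := rho_isProb P hP
  unfold mass
  rw [measure_compl (measAll s) (rho_ne_top P hP s), rho_univ P hP]
  rw [ENNReal.toReal_sub_of_le (rho_le_one P hP s) ENNReal.one_ne_top]
  simp

lemma mass_diff (hP : IsStochastic P) {s t : Set (List A)} (h : t ⊆ s) :
    mass P (s \ t) = mass P s - mass P t := by
  unfold mass
  rw [measure_diff h (measAll t).nullMeasurableSet (rho_ne_top P hP t)]
  rw [ENNReal.toReal_sub_of_le (measure_mono h) (rho_ne_top P hP s)]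

lemma mass_inter_add_diff (hP : IsStochastic P) (s t : Set (List A)) :
    mass P (s ∩ t) + mass P (s \ t) = mass P s := by
  unfold mass
  rw [← ENNReal.toReal_add (rho_ne_top P hP _) (rho_ne_top P hP _)]
  congr 1
  exact measure_inter_add_diff s (measAll t)

/-- A set of zero measure consists of `P`-null points. -/
lemma null_points (hP : IsStochastic P) {s : Set (List A)} (h : rho P s = 0) :
    ∀ x ∈ s, ENNReal.ofReal (P x) = 0 := by
  intro x hx
  have h1 : rho P {x} ≤ rho P s := measure_mono (Set.singleton_subset_iff.mpr hx)
  rw [h, le_zero_iff, rho_singleton] at h1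
  exact h1

end Measure

section UpSets

variable (f : List A → ℝ) (P : List A → ℝ)

/-- Up-sets with respect to the real-valued "coordinate" `f`. -/
def IsUp (U : Set (List A)) : Prop := ∀ ⦃x⦄, x ∈ U → ∀ ⦃y⦄, f x ≤ f y → y ∈ U

lemma isUp_empty : IsUp f (∅ : Set (List A)) := fun x hx => absurd hx (Set.notMem_empty x)

lemma isUp_univ : IsUp f (Set.univ : Set (List A)) := fun _ _ _ _ => trivial

lemma isUp_iUnion {ι : Sort*} {U : ι → Set (List A)} (h : ∀ i, IsUp f (U i)) :
    IsUp f (⋃ i, U i) := by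
  intro x hx y hxy
  rcases Set.mem_iUnion.mp hx with ⟨i, hi⟩
  exact Set.mem_iUnion.mpr ⟨i, h i hi hxy⟩

lemma isUp_iInter {ι : Sort*} {U : ι → Set (List A)} (h : ∀ i, IsUp f (U i)) :
    IsUp f (⋂ i, U i) := by
  intro x hx y hxy
  exact Set.mem_iInter.mpr fun i => h i (Set.mem_iInter.mp hx i) hxy

lemma isUp_pair {U V : Set (List A)} (hU : IsUp f U) (hV : IsUp f V) : U ⊆ V ∨ V ⊆ U := by
  by_contra hcon
  push_neg at hcon
  rcases Set.not_subset.mp hcon.1 with ⟨x, hxU, hxV⟩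
  rcases Set.not_subset.mp hcon.2 with ⟨y, hyV, hyU⟩
  rcases le_total (f x) (f y) with h | h
  · exact hyU (hU hxU h)
  · exact hxV (hV hyV h)

/-- Key comparability-mod-null lemma: among up-sets, smaller mass means
contained up to a `P`-null set. -/
lemma sand (hP : IsStochastic P) {U V : Set (List A)} (hU : IsUp f U) (hV : IsUp f V)
    (h : mass P U ≤ mass P V) : rho P (U \ V) = 0 := by
  have hpts : ∀ x ∈ U \ V, ENNReal.ofReal (P x) = 0 := by
    rintro x ⟨hxU, hxV⟩
    -- V ⊆ {y | f x < f y}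
    have hVsub : V ⊆ {y | f x < f y} := by
      intro y hy
      by_contra hle
      have hle' : f y ≤ f x := le_of_not_gt (by simpa using hle)
      exact hxV (hV hy hle')
    have hsub2 : insert x {y | f x < f y} ⊆ U := by
      intro y hy
      rcases Set.mem_insert_iff.mp hy with rfl | hy'
      · exact hxU
      · exact hU hxU (le_of_lt hy')
    have hx_notin : x ∉ {y | f x < f y} := by simp
    have hins : rho P (insert x {y | f x < f y}) = rho P {x} + rho P {y | f x < f y} := by
      rw [Set.insert_eq, measure_union (Set.disjoint_singleton_left.mpr hx_notin) (measAll _)]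
    have hchain : rho P {x} + rho P V ≤ rho P V := by
      calc rho P {x} + rho P V ≤ rho P {x} + rho P {y | f x < f y} :=
            add_le_add (le_refl _) (measure_mono hVsub)
      _ = rho P (insert x {y | f x < f y}) := hins.symm
      _ ≤ rho P U := measure_mono hsub2
      _ ≤ rho P V := (mass_le_iff P hP).mp h
    have hne : rho P V ≠ ⊤ := rho_ne_top P hP V
    have : rho P {x} + rho P V ≤ 0 + rho P V := by simpa using hchain
    have := ENNReal.le_of_add_le_add_right hne this
    rw [rho_singleton] at this
    exact le_zero_iff.mp this
  -- countable set of null points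
  have : rho P (U \ V) ≤ ∑' x : (U \ V : Set (List A)), rho P {(x : List A)} := by
    have hcover : (U \ V) ⊆ ⋃ x : (U \ V : Set (List A)), {(x : List A)} := by
      intro z hz
      exact Set.mem_iUnion.mpr ⟨⟨z, hz⟩, rfl⟩
    calc rho P (U \ V) ≤ rho P (⋃ x : (U \ V : Set (List A)), {(x : List A)}) :=
          measure_mono hcover
    _ ≤ ∑' x : (U \ V : Set (List A)), rho P {(x : List A)} := measure_iUnion_le _
  have hzero : ∀ x : (U \ V : Set (List A)), rho P {(x : List A)} = 0 := by
    intro x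
    rw [rho_singleton]
    exact hpts x x.2
  rw [tsum_congr hzero] at this
  simpa using this

/-- Existence of the "largest up-set of mass at most `τ`" (in the mass sense). -/
lemma exists_cnet (hP : IsStochastic P) (τ : ℝ) (hτ : 0 ≤ τ) :
    ∃ C, IsUp f C ∧ mass P C ≤ τ ∧
      ∀ U, IsUp f U → mass P U ≤ τ → mass P U ≤ mass P C := by
  classical
  set S : Set ℝ := {m | ∃ U, IsUp f U ∧ mass P U = m ∧ m ≤ τ} with hS
  have hne : S.Nonempty := ⟨mass P (∅ : Set (List A)), ⟨∅, isUp_empty f, rfl, by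
    simpa [mass, OuterMeasureClass.measure_empty] using hτ⟩⟩
  have hbdd : BddAbove S := ⟨τ, fun m hm => hm.choose_spec.2.2⟩
  set s := sSup S with hs
  have hchoice : ∀ k : ℕ, ∃ U, IsUp f U ∧ mass P U ≤ τ ∧ s - 1/(k+1) < mass P U := by
    intro k
    have hlt : s - 1/(k+1) < s := by
      have : (0:ℝ) < 1/((k:ℝ)+1) := by positivity
      linarith
    obtain ⟨m, hmS, hmlt⟩ := exists_lt_of_lt_csSup hne hlt
    obtain ⟨U, hU, rfl, hUτ⟩ := hmS
    exact ⟨U, hU, hUτ, hmlt⟩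
  choose Useq hUup hUτ hUlt using hchoice
  refine ⟨⋃ k, Useq k, isUp_iUnion f hUup, ?_, ?_⟩
  · -- mass of the union is ≤ τ, via directedness
    have hdir : Directed (· ⊆ ·) Useq := by
      intro i j
      rcases isUp_pair f (hUup i) (hUup j) with h | h
      · exact ⟨j, h, subset_rfl⟩
      · exact ⟨i, subset_rfl, h⟩
    have := hdir.measure_iUnion (μ := rho P)
    unfold mass
    rw [this]
    have hsup : (⨆ k, rho P (Useq k)) ≤ ENNReal.ofReal τ := by
      apply iSup_le
      intro k
      rw [rho_eq_ofReal_mass P hP]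
      exact ENNReal.ofReal_le_ofReal (hUτ k)
    calc (⨆ k, rho P (Useq k)).toReal ≤ (ENNReal.ofReal τ).toReal :=
          ENNReal.toReal_mono ENNReal.ofReal_ne_top hsup
    _ = τ := ENNReal.toReal_ofReal hτ
  · intro U hU hUle
    have h1 : mass P U ≤ s := le_csSup hbdd ⟨U, hU, rfl, hUle⟩
    have h2 : ∀ k : ℕ, s - 1/((k:ℝ)+1) ≤ mass P (⋃ k, Useq k) := by
      intro k
      exact le_trans (le_of_lt (hUlt k))
        (mass_mono P hP (Set.subset_iUnion Useq k))
    have h3 : s ≤ mass P (⋃ k, Useq k) := by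
      by_contra hcon
      push_neg at hcon
      obtain ⟨k, hk⟩ := exists_nat_one_div_lt (sub_pos.mpr hcon)
      have := h2 k
      linarith
    linarith

end UpSets

section Tuple

variable (P : List A → ℝ) (n : ℕ)

/-- Counting function: number of samples among the `n` coordinates of `v` in `X`. -/
noncomputable def cntR (v : Fin n → List A) (X : Set (List A)) : ℝ :=
  ∑ i : Fin n, X.indicator (fun _ => (1:ℝ)) (v i)

lemma cntR_nonneg (v : Fin n → List A) (X : Set (List A)) : 0 ≤ cntR n v X :=
  Finset.sum_nonneg fun i _ => Set.indicator_nonneg (fun _ _ => zero_le_one) _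

lemma cntR_le (v : Fin n → List A) (X : Set (List A)) : cntR n v X ≤ n := by
  calc cntR n v X ≤ ∑ _i : Fin n, (1:ℝ) := Finset.sum_le_sum (fun i _ => Set.indicator_le_self' (fun _ _ => zero_le_one) _)
  _ = n := by simp

lemma cntR_mono (v : Fin n → List A) {X Y : Set (List A)} (h : X ⊆ Y) :
    cntR n v X ≤ cntR n v Y := by
  apply Finset.sum_le_sum
  intro i _
  by_cases hx : v i ∈ X
  · rw [Set.indicator_of_mem hx, Set.indicator_of_mem (h hx)]
  · rw [Set.indicator_of_notMem hx]
    exact Set.indicator_nonneg (fun _ _ => zero_le_one) _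

lemma cntR_split (v : Fin n → List A) (X Y : Set (List A)) :
    cntR n v X = cntR n v (X ∩ Y) + cntR n v (X \ Y) := by
  unfold cntR
  rw [← Finset.sum_add_distrib]
  apply Finset.sum_congr rfl
  intro i _
  by_cases hx : v i ∈ X
  · by_cases hy : v i ∈ Y
    · rw [Set.indicator_of_mem hx, Set.indicator_of_mem (Set.mem_inter hx hy),
        Set.indicator_of_notMem (fun h => h.2 hy)]
      norm_num
    · rw [Set.indicator_of_mem hx, Set.indicator_of_notMem (fun h => hy h.2),
        Set.indicator_of_mem (show v i ∈ X \ Y from ⟨hx, hy⟩)]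
      norm_num
  · rw [Set.indicator_of_notMem hx, Set.indicator_of_notMem (fun h => hx h.1),
      Set.indicator_of_notMem (fun h => hx h.1)]
    norm_num

lemma cntR_add_compl (v : Fin n → List A) (X : Set (List A)) :
    cntR n v X + cntR n v Xᶜ = n := by
  unfold cntR
  rw [← Finset.sum_add_distrib]
  have : ∀ i : Fin n, X.indicator (fun _ => (1:ℝ)) (v i) + Xᶜ.indicator (fun _ => (1:ℝ)) (v i) = 1 := by
    intro i
    by_cases hx : v i ∈ X
    · rw [Set.indicator_of_mem hx, Set.indicator_of_notMem (by simpa using hx)]; norm_num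
    · rw [Set.indicator_of_notMem hx, Set.indicator_of_mem (by simpa using hx)]; norm_num
  rw [Finset.sum_congr rfl (fun i _ => this i)]
  simp

/-- The set of `P`-null words. -/
def Zset : Set (List A) := {x | ENNReal.ofReal (P x) = 0}

lemma rho_Zset : rho P (Zset P) = 0 := by
  rw [rho_apply']
  apply ENNReal.tsum_eq_zero.mpr
  intro x
  exact x.2

lemma cntR_null (hP : IsStochastic P) {v : Fin n → List A} (hv : ∀ i, v i ∉ Zset P)
    {S : Set (List A)} (hS : rho P S = 0) : cntR n v S = 0 := by
  unfold cntR
  apply Finset.sum_eq_zero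
  intro i _
  apply Set.indicator_of_notMem
  intro hmem
  exact hv i (null_points P hP hS _ hmem)

end Tuple

section Map

variable (P : List A → ℝ) (n : ℕ) (μ : Measure (ℕ → List A))

instance : Countable (List A) := inferInstance

lemma measSingletonT (v : Fin n → List A) : MeasurableSet {v} := by
  have h : {v} = ⋂ i, (fun g : Fin n → List A => g i) ⁻¹' {v i} := by
    ext g
    simp [funext_iff]
  rw [h]
  exact MeasurableSet.iInter fun i => (measurable_pi_apply i) (measAll _)

instance instMSC : MeasurableSingletonClass (Fin n → List A) := ⟨measSingletonT n⟩

lemma measT (s : Set (Fin n → List A)) : MeasurableSet s :=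
  (Set.to_countable s).measurableSet

/-- The projection onto the first `n` coordinates. -/
def proj (ω : ℕ → List A) : Fin n → List A := fun i => ω i

lemma measurable_proj : Measurable (proj (A := A) n) :=
  measurable_pi_lambda _ fun i => measurable_pi_apply (i : ℕ)

/-- The law of the first `n` coordinates. -/
noncomputable def nu : Measure (Fin n → List A) := μ.map (proj n)

lemma tsum_set_singleton {α : Type*} (a : α) (f : α → ℝ≥0∞) :
    ∑' x : ({a} : Set α), f (x : α) = f a := by
  rw [tsum_eq_single (⟨a, rfl⟩ : ({a} : Set α))]
  · intro b hb
    exfalso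
    exact hb (Subtype.ext b.2)

lemma nu_singleton (hμ : IsIIDProduct P μ) (v : Fin n → List A) :
    nu n μ {v} = ∏ i : Fin n, ENNReal.ofReal (P (v i)) := by
  classical
  rw [nu, Measure.map_apply (measurable_proj n) (measSingletonT n v)]
  set E : ℕ → Set (List A) := fun j => if h : j < n then ({v ⟨j, h⟩} : Set (List A)) else Set.univ
    with hE
  have hset : (proj n) ⁻¹' {v} = {ω | ∀ i ∈ Finset.range n, ω i ∈ E i} := by
    ext ω
    simp only [Set.mem_preimage, Set.mem_singleton_iff, Set.mem_setOf_eq, Finset.mem_range]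
    constructor
    · intro h i hi
      rw [hE]
      simp only [hi, dif_pos]
      have : proj n ω ⟨i, hi⟩ = v ⟨i, hi⟩ := by rw [h]
      simpa [proj] using this
    · intro h
      funext i
      have h2 := h i.val i.isLt
      rw [hE] at h2
      simp only [i.isLt, dif_pos] at h2
      simpa [proj] using h2
  rw [hset, hμ (Finset.range n) E]
  rw [← Fin.prod_univ_eq_prod_range (fun j => ∑' w : E j, ENNReal.ofReal (P (w : List A))) n]
  apply Finset.prod_congr rfl
  intro i _
  have : E (i : ℕ) = ({v i} : Set (List A)) := by
    rw [hE]
    simp only [i.isLt, dif_pos, Fin.eta]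
  rw [this, tsum_set_singleton (v i) (fun w => ENNReal.ofReal (P w))]

lemma nu_univ (hμ : IsIIDProduct P μ) : nu n μ Set.univ = 1 := by
  rw [nu, Measure.map_apply (measurable_proj n) MeasurableSet.univ]
  have h : (Set.univ : Set (ℕ → List A)) = {ω | ∀ i ∈ (∅ : Finset ℕ), ω i ∈ (Set.univ : Set (List A))} := by
    ext ω; simp
  rw [Set.preimage_univ, h, hμ ∅ (fun _ => Set.univ)]
  simp

lemma nu_isProb (hμ : IsIIDProduct P μ) : IsProbabilityMeasure (nu (A := A) n μ) :=
  ⟨nu_univ P n μ hμ⟩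

lemma nu_coord_null (hμ : IsIIDProduct P μ) (i : Fin n) (S : Set (List A)) (hS : rho P S = 0) :
    nu n μ {v | v i ∈ S} = 0 := by
  rw [nu, Measure.map_apply (measurable_proj n) (measT n _)]
  have h : (proj n) ⁻¹' {v : Fin n → List A | v i ∈ S} = {ω | ∀ j ∈ ({(i : ℕ)} : Finset ℕ), ω j ∈ S} := by
    ext ω
    simp [proj]
  rw [h, hμ ({(i : ℕ)} : Finset ℕ) (fun _ => S)]
  rw [Finset.prod_singleton]
  rw [← rho_apply']
  exact hS

lemma nu_Zhit (hP : IsStochastic P) (hμ : IsIIDProduct P μ) :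
    nu n μ {v | ¬ ∀ i, v i ∉ Zset P} = 0 := by
  have hsub : {v : Fin n → List A | ¬ ∀ i, v i ∉ Zset P} ⊆ ⋃ i : Fin n, {v | v i ∈ Zset P} := by
    intro v hv
    push_neg at hv
    obtain ⟨i, hi⟩ := hv
    exact Set.mem_iUnion.mpr ⟨i, hi⟩
  apply le_antisymm _ zero_le
  calc nu n μ {v | ¬ ∀ i, v i ∉ Zset P} ≤ nu n μ (⋃ i : Fin n, {v | v i ∈ Zset P}) :=
        measure_mono hsub
  _ ≤ ∑' i : Fin n, nu n μ {v | v i ∈ Zset P} := measure_iUnion_le _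
  _ = 0 := by
      rw [tsum_congr (fun i => nu_coord_null P n μ hμ i _ (rho_Zset P))]
      simp

/-- Product structure of tsums over tuples. -/
lemma tsum_pi_prod (g : List A → ℝ≥0∞) (m : ℕ) :
    ∑' v : Fin m → List A, ∏ i, g (v i) = (∑' x, g x) ^ m := by
  induction m with
  | zero =>
    rw [pow_zero]
    rw [tsum_eq_single (fun i => i.elim0)]
    · simp
    · intro b hb
      exact absurd (funext fun i => i.elim0) (fun h => hb h)
  | succ m ih =>
    have h1 : ∑' v : Fin (m+1) → List A, ∏ i, g (v i)
        = ∑' p : (List A) × (Fin m → List A), ∏ i, g ((Fin.consEquiv (fun _ => List A)) p i) :=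
      (Equiv.tsum_eq (Fin.consEquiv (fun _ => List A)) _).symm
    rw [h1]
    have h2 : ∀ p : (List A) × (Fin m → List A),
        (∏ i, g ((Fin.consEquiv (fun _ => List A)) p i)) = g p.1 * ∏ i : Fin m, g (p.2 i) := by
      rintro ⟨x, u⟩
      rw [Fin.prod_univ_succ]
      congr 1
    rw [tsum_congr h2, ENNReal.tsum_prod']
    calc ∑' (a : List A) (b : Fin m → List A), g a * ∏ i, g (b i)
        = ∑' (a : List A), g a * ∑' b : Fin m → List A, ∏ i, g (b i) := by
          apply tsum_congr; intro a; rw [ENNReal.tsum_mul_left]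
    _ = (∑' b : Fin m → List A, ∏ i, g (b i)) * ∑' a, g a := by
          rw [ENNReal.tsum_mul_right]; ring
    _ = (∑' x, g x) ^ (m + 1) := by rw [ih, pow_succ]

end Map

section Chernoff

variable (P : List A → ℝ) (n : ℕ) (μ : Measure (ℕ → List A))

lemma coord_mgf (hP : IsStochastic P) (X : Set (List A)) (θ : ℝ) :
    ∑' x : List A, ENNReal.ofReal (P x) *
        ENNReal.ofReal (Real.exp (θ * X.indicator (fun _ => (1:ℝ)) x))
      ≤ ENNReal.ofReal (Real.exp (mass P X * (Real.exp θ - 1))) := by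
  have hsplit : ∀ x : List A, ENNReal.ofReal (P x) *
      ENNReal.ofReal (Real.exp (θ * X.indicator (fun _ => (1:ℝ)) x))
      = (X.indicator (fun y => ENNReal.ofReal (P y)) x) * ENNReal.ofReal (Real.exp θ)
        + (Xᶜ.indicator (fun y => ENNReal.ofReal (P y)) x) := by
    intro x
    by_cases hx : x ∈ X
    · rw [Set.indicator_of_mem hx, Set.indicator_of_mem hx,
        Set.indicator_of_notMem (by simpa using hx)]
      simp
    · rw [Set.indicator_of_notMem hx, Set.indicator_of_notMem hx,
        Set.indicator_of_mem (by simpa using hx)]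
      simp
  rw [tsum_congr hsplit, ENNReal.tsum_add, ENNReal.tsum_mul_right, ← rho_apply, ← rho_apply]
  have hc : rho P Xᶜ = ENNReal.ofReal (1 - mass P X) := by
    rw [rho_eq_ofReal_mass P hP, mass_compl P hP]
  rw [rho_eq_ofReal_mass P hP X, hc]
  have hexp : (0:ℝ) ≤ Real.exp θ := (Real.exp_pos θ).le
  have hm := mass_nonneg P X
  have h01 : 0 ≤ 1 - mass P X := by linarith [mass_le_one P hP X]
  rw [← ENNReal.ofReal_mul hm, ← ENNReal.ofReal_add (by positivity) h01]
  apply ENNReal.ofReal_le_ofReal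
  have h1 : mass P X * Real.exp θ + (1 - mass P X)
      = mass P X * (Real.exp θ - 1) + 1 := by ring
  rw [h1]
  exact Real.add_one_le_exp _

lemma markov_bound (hP : IsStochastic P) (hμ : IsIIDProduct P μ) (X : Set (List A))
    (θ a : ℝ) :
    nu n μ {v | Real.exp (θ * a) ≤ Real.exp (θ * cntR n v X)}
      ≤ ENNReal.ofReal (Real.exp ((n : ℝ) * (mass P X * (Real.exp θ - 1)) - θ * a)) := by
  classical
  set f : (Fin n → List A) → ℝ≥0∞ := fun v => ENNReal.ofReal (Real.exp (θ * cntR n v X))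
    with hf_def
  have hmeas : Measurable f := measurable_of_countable f
  set ee : ℝ≥0∞ := ENNReal.ofReal (Real.exp (θ * a)) with hee
  have hmarkov := mul_meas_ge_le_lintegral₀ (μ := nu n μ) hmeas.aemeasurable ee
  have hsub : {v | Real.exp (θ * a) ≤ Real.exp (θ * cntR n v X)} ⊆ {v | ee ≤ f v} :=
    fun v hv => ENNReal.ofReal_le_ofReal hv
  have hlint : ∫⁻ v, f v ∂(nu n μ)
      = (∑' x : List A, ENNReal.ofReal (P x) *
          ENNReal.ofReal (Real.exp (θ * X.indicator (fun _ => (1:ℝ)) x))) ^ n := by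
    rw [lintegral_countable' f]
    have hterm : ∀ v : Fin n → List A, f v * nu n μ {v}
        = ∏ i : Fin n, (ENNReal.ofReal (P (v i)) *
            ENNReal.ofReal (Real.exp (θ * X.indicator (fun _ => (1:ℝ)) (v i)))) := by
      intro v
      rw [nu_singleton P n μ hμ v]
      have hfv : f v = ∏ i : Fin n,
          ENNReal.ofReal (Real.exp (θ * X.indicator (fun _ => (1:ℝ)) (v i))) := by
        rw [hf_def]
        simp only [cntR, Finset.mul_sum, Real.exp_sum]
        exact ENNReal.ofReal_prod_of_nonneg fun i _ => (Real.exp_pos _).le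
      rw [hfv, ← Finset.prod_mul_distrib]
      apply Finset.prod_congr rfl
      intro i _
      ring
    rw [tsum_congr hterm]
    exact tsum_pi_prod (fun x => ENNReal.ofReal (P x) *
      ENNReal.ofReal (Real.exp (θ * X.indicator (fun _ => (1:ℝ)) x))) n
  have hpow : (∑' x : List A, ENNReal.ofReal (P x) *
        ENNReal.ofReal (Real.exp (θ * X.indicator (fun _ => (1:ℝ)) x))) ^ n
      ≤ ENNReal.ofReal (Real.exp ((n:ℝ) * (mass P X * (Real.exp θ - 1)))) := by
    calc _ ≤ (ENNReal.ofReal (Real.exp (mass P X * (Real.exp θ - 1)))) ^ n :=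
          pow_le_pow_left' (coord_mgf P hP X θ) n
    _ = ENNReal.ofReal (Real.exp (mass P X * (Real.exp θ - 1)) ^ n) := by
          rw [ENNReal.ofReal_pow (Real.exp_pos _).le]
    _ = _ := by rw [← Real.exp_nat_mul]
  -- combine
  have hee_pos : ee ≠ 0 := by
    rw [hee]
    simp [Real.exp_pos]
  have hee_top : ee ≠ ⊤ := ENNReal.ofReal_ne_top
  calc nu n μ {v | Real.exp (θ * a) ≤ Real.exp (θ * cntR n v X)}
      ≤ nu n μ {v | ee ≤ f v} := measure_mono hsub
  _ ≤ (∫⁻ v, f v ∂(nu n μ)) / ee := by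
      rw [ENNReal.le_div_iff_mul_le (Or.inl hee_pos) (Or.inl hee_top), mul_comm]
      exact hmarkov
  _ ≤ ENNReal.ofReal (Real.exp ((n:ℝ) * (mass P X * (Real.exp θ - 1)))) / ee := by
      apply ENNReal.div_le_div_right
      rw [hlint]
      exact hpow
  _ = ENNReal.ofReal (Real.exp ((n : ℝ) * (mass P X * (Real.exp θ - 1)) - θ * a)) := by
      rw [hee, ENNReal.div_eq_inv_mul, ← ENNReal.ofReal_inv_of_pos (Real.exp_pos _),
        ← Real.exp_neg, ← ENNReal.ofReal_mul (Real.exp_pos _).le, ← Real.exp_add]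
      congr 1
      ring

end Chernoff

section Bernstein

variable (P : List A → ℝ) (n : ℕ) (μ : Measure (ℕ → List A))

lemma exp_quad {x : ℝ} (hx : |x| ≤ 1) : Real.exp x ≤ 1 + x + (3/4) * x^2 := by
  have h := Real.exp_bound hx (by norm_num : 0 < 2)
  have hsum : ∑ i ∈ Finset.range 2, x^i / (Nat.factorial i) = 1 + x := by
    simp [Finset.sum_range_succ]
  rw [hsum] at h
  have habs := (abs_le.mp h).2
  have hsq : |x|^2 = x^2 := sq_abs x
  rw [hsq] at habs
  norm_num [Nat.factorial] at habs
  linarith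

/-- The two-sided Chernoff/Bernstein bound for the count of samples in `X`. -/
lemma chernoff_tail (hP : IsStochastic P) (hμ : IsIIDProduct P μ) (X : Set (List A))
    {t q : ℝ} (ht : 0 < t) (hq : 0 < q) (hXq : mass P X ≤ q) :
    nu n μ {v | ¬ |cntR n v X - n * mass P X| ≤ n * t}
      ≤ 2 * ENNReal.ofReal (Real.exp (-((n:ℝ) * min (t^2/(4*q)) (t/2)))) := by
  set p := mass P X with hp
  have hp0 : 0 ≤ p := mass_nonneg P X
  set lam := min 1 (t/(2*q)) with hlam
  have hlam0 : 0 < lam := lt_min one_pos (by positivity)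
  have hlam1 : lam ≤ 1 := min_le_left _ _
  have habs : |lam| ≤ 1 := by rw [abs_of_pos hlam0]; exact hlam1
  have habs' : |(-lam)| ≤ 1 := by rw [abs_neg, abs_of_pos hlam0]; exact hlam1
  have hkey : q * ((3/4) * lam^2) - lam * t ≤ - min (t^2/(4*q)) (t/2) := by
    rcases le_or_gt t (2*q) with hc | hc
    · have hlam_eq : lam = t/(2*q) := min_eq_right (by
        rw [div_le_one (by positivity)]; linarith)
      rw [hlam_eq]
      have e1 : q * ((3/4) * (t/(2*q))^2) - (t/(2*q)) * t = -(5/16) * (t^2/q) := by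
        field_simp
        ring
      rw [e1]
      have e2 : min (t^2/(4*q)) (t/2) ≤ t^2/(4*q) := min_le_left _ _
      have e3 : t^2/(4*q) = (1/4) * (t^2/q) := by ring
      have e4 : 0 ≤ t^2/q := by positivity
      linarith
    · have hlam_eq : lam = 1 := min_eq_left (by
        rw [le_div_iff₀ (by positivity)]; linarith)
      rw [hlam_eq]
      have e2 : min (t^2/(4*q)) (t/2) ≤ t/2 := min_le_right _ _
      nlinarith
  have hq34 : ∀ y : ℝ, 0 ≤ y → y ≤ (3/4) * lam^2 → p * y - lam * t ≤ q * ((3/4)*lam^2) - lam * t := by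
    intro y hy0 hy
    have h1 : p * y ≤ q * y := mul_le_mul_of_nonneg_right hXq hy0
    have h2 : q * y ≤ q * ((3/4)*lam^2) := mul_le_mul_of_nonneg_left hy hq.le
    linarith
  have hn0 : (0:ℝ) ≤ (n:ℝ) := Nat.cast_nonneg n
  -- upper tail
  have hup : nu n μ {v | (n:ℝ) * (p + t) ≤ cntR n v X}
      ≤ ENNReal.ofReal (Real.exp (-((n:ℝ) * min (t^2/(4*q)) (t/2)))) := by
    have hincl : {v : Fin n → List A | (n:ℝ) * (p + t) ≤ cntR n v X}
        ⊆ {v | Real.exp (lam * ((n:ℝ)*(p+t))) ≤ Real.exp (lam * cntR n v X)} :=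
      fun v hv => Real.exp_le_exp.mpr (mul_le_mul_of_nonneg_left hv hlam0.le)
    refine le_trans (le_trans (measure_mono hincl) (markov_bound P n μ hP hμ X lam _)) ?_
    apply ENNReal.ofReal_le_ofReal
    apply Real.exp_le_exp.mpr
    have hy : Real.exp lam - 1 - lam ≤ (3/4) * lam^2 := by
      have := exp_quad habs
      linarith
    have hy0 : 0 ≤ Real.exp lam - 1 - lam := by linarith [Real.add_one_le_exp lam]
    have hcore : p * (Real.exp lam - 1) - lam * (p + t) ≤ - min (t^2/(4*q)) (t/2) := by
      have := hq34 _ hy0 hy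
      calc p * (Real.exp lam - 1) - lam * (p + t)
          = p * (Real.exp lam - 1 - lam) - lam * t := by ring
      _ ≤ q * ((3/4)*lam^2) - lam * t := this
      _ ≤ - min (t^2/(4*q)) (t/2) := hkey
    calc (n:ℝ) * (p * (Real.exp lam - 1)) - lam * ((n:ℝ)*(p+t))
        = (n:ℝ) * (p * (Real.exp lam - 1) - lam * (p + t)) := by ring
    _ ≤ (n:ℝ) * (- min (t^2/(4*q)) (t/2)) := mul_le_mul_of_nonneg_left hcore hn0
    _ = -((n:ℝ) * min (t^2/(4*q)) (t/2)) := by ring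
  -- lower tail
  have hlo : nu n μ {v | cntR n v X ≤ (n:ℝ) * (p - t)}
      ≤ ENNReal.ofReal (Real.exp (-((n:ℝ) * min (t^2/(4*q)) (t/2)))) := by
    have hincl : {v : Fin n → List A | cntR n v X ≤ (n:ℝ) * (p - t)}
        ⊆ {v | Real.exp ((-lam) * ((n:ℝ)*(p-t))) ≤ Real.exp ((-lam) * cntR n v X)} := by
      intro v hv
      apply Real.exp_le_exp.mpr
      have := mul_le_mul_of_nonneg_left hv hlam0.le
      nlinarith
    refine le_trans (le_trans (measure_mono hincl) (markov_bound P n μ hP hμ X (-lam) _)) ?_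
    apply ENNReal.ofReal_le_ofReal
    apply Real.exp_le_exp.mpr
    have hy : Real.exp (-lam) - 1 + lam ≤ (3/4) * lam^2 := by
      have := exp_quad habs'
      nlinarith
    have hy0 : 0 ≤ Real.exp (-lam) - 1 + lam := by linarith [Real.add_one_le_exp (-lam)]
    have hcore : p * (Real.exp (-lam) - 1) + lam * (p - t) ≤ - min (t^2/(4*q)) (t/2) := by
      have := hq34 _ hy0 hy
      calc p * (Real.exp (-lam) - 1) + lam * (p - t)
          = p * (Real.exp (-lam) - 1 + lam) - lam * t := by ring
      _ ≤ q * ((3/4)*lam^2) - lam * t := this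
      _ ≤ - min (t^2/(4*q)) (t/2) := hkey
    calc (n:ℝ) * (p * (Real.exp (-lam) - 1)) - (-lam) * ((n:ℝ)*(p-t))
        = (n:ℝ) * (p * (Real.exp (-lam) - 1) + lam * (p - t)) := by ring
    _ ≤ (n:ℝ) * (- min (t^2/(4*q)) (t/2)) := mul_le_mul_of_nonneg_left hcore hn0
    _ = -((n:ℝ) * min (t^2/(4*q)) (t/2)) := by ring
  -- combine
  have hsplit : {v : Fin n → List A | ¬ |cntR n v X - n * p| ≤ n * t}
      ⊆ {v | (n:ℝ) * (p + t) ≤ cntR n v X} ∪ {v | cntR n v X ≤ (n:ℝ) * (p - t)} := by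
    intro v hv
    rcases lt_or_ge ((n:ℝ) * t) (cntR n v X - n * p) with h | h
    · left
      simp only [Set.mem_setOf_eq]
      nlinarith
    · right
      simp only [Set.mem_setOf_eq]
      have h2 : cntR n v X - n * p < -((n:ℝ)*t) := by
        rcases abs_cases (cntR n v X - n * p) with ⟨he, _⟩ | ⟨he, _⟩
        · exfalso; exact hv (by rw [he] at *; linarith)
        · by_contra hcon
          push_neg at hcon
          exact hv (abs_le.mpr ⟨by linarith, by linarith⟩)
      nlinarith
  calc nu n μ {v | ¬ |cntR n v X - n * p| ≤ n * t}
      ≤ nu n μ ({v | (n:ℝ) * (p + t) ≤ cntR n v X} ∪ {v | cntR n v X ≤ (n:ℝ) * (p - t)}) :=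
        measure_mono hsplit
  _ ≤ nu n μ {v | (n:ℝ) * (p + t) ≤ cntR n v X} + nu n μ {v | cntR n v X ≤ (n:ℝ) * (p - t)} :=
        measure_union_le _ _
  _ ≤ _ := by
        rw [two_mul]
        exact add_le_add hup hlo

end Bernstein

/-- parent index in the dyadic scheme -/
def par (k : ℕ) : ℕ := (k+1)/2

lemma par_le {ℓ k : ℕ} (hk : k ≤ 2^(ℓ+1)) : par k ≤ 2^ℓ := by
  unfold par
  have : 2^(ℓ+1) = 2 * 2^ℓ := by ring
  omega

lemma par_bounds (k : ℕ) : k ≤ 2 * par k ∧ 2 * par k ≤ k + 1 := by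
  unfold par
  omega

noncomputable def bet (ε : ℝ) (ℓ : ℕ) : ℝ := ε/20 * (5/6)^ℓ

noncomputable def gam (ε : ℝ) (ℓ : ℕ) : ℝ := ∑ l ∈ Finset.range (ℓ+1), bet ε l

lemma bet_pos {ε : ℝ} (hε : 0 < ε) (ℓ : ℕ) : 0 < bet ε ℓ := by
  unfold bet; positivity

lemma gam_succ (ε : ℝ) (ℓ : ℕ) : gam ε (ℓ+1) = gam ε ℓ + bet ε (ℓ+1) :=
  Finset.sum_range_succ _ _

lemma gam_zero (ε : ℝ) : gam ε 0 = bet ε 0 := by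
  unfold gam
  rw [Finset.sum_range_one]

lemma gam_le {ε : ℝ} (hε : 0 ≤ ε) (ℓ : ℕ) : gam ε ℓ ≤ (3/10) * ε := by
  unfold gam bet
  rw [← Finset.mul_sum]
  have hgeom : ∑ l ∈ Finset.range (ℓ+1), ((5:ℝ)/6)^l ≤ 6 := by
    have h56 : ((5:ℝ)/6) ≠ 1 := by norm_num
    rw [geom_sum_eq h56]
    have hp : (0:ℝ) < (5/6)^(ℓ+1) := by positivity
    have : ((5:ℝ)/6)^(ℓ+1) - 1 ≥ -1 := by linarith
    have hd : ((5:ℝ)/6 - 1) = -(1/6) := by norm_num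
    rw [hd]
    rw [div_le_iff_of_neg (by norm_num : -(1/6 : ℝ) < 0)]
    linarith
  calc ε/20 * ∑ l ∈ Finset.range (ℓ+1), ((5:ℝ)/6)^l ≤ ε/20 * 6 := by
        apply mul_le_mul_of_nonneg_left hgeom (by positivity)
  _ = (3/10) * ε := by ring

section Chain

variable (f : List A → ℝ) (P : List A → ℝ) (hP : IsStochastic P)
include hP

noncomputable def Cn (ℓ k : ℕ) : Set (List A) :=
  (exists_cnet f P hP ((k:ℝ)/2^ℓ) (by positivity)).choose

lemma Cn_up (ℓ k : ℕ) : IsUp f (Cn f P hP ℓ k) :=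
  (exists_cnet f P hP ((k:ℝ)/2^ℓ) (by positivity)).choose_spec.1

lemma Cn_mass_le (ℓ k : ℕ) : mass P (Cn f P hP ℓ k) ≤ (k:ℝ)/2^ℓ :=
  (exists_cnet f P hP ((k:ℝ)/2^ℓ) (by positivity)).choose_spec.2.1

lemma Cn_max (ℓ k : ℕ) : ∀ U, IsUp f U → mass P U ≤ (k:ℝ)/2^ℓ →
    mass P U ≤ mass P (Cn f P hP ℓ k) :=
  (exists_cnet f P hP ((k:ℝ)/2^ℓ) (by positivity)).choose_spec.2.2

/-- `k` is an admissible index at level `ℓ` : some up-set has mass in the dyadic window. -/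
def Adm (ℓ k : ℕ) : Prop :=
  ∃ U, IsUp f U ∧ ((k:ℝ)-1)/2^ℓ < mass P U ∧ mass P U ≤ (k:ℝ)/2^ℓ

lemma adm_mass_lt {ℓ k : ℕ} (h : Adm f P ℓ k) :
    ((k:ℝ)-1)/2^ℓ < mass P (Cn f P hP ℓ k) := by
  obtain ⟨U, hU, h1, h2⟩ := h
  exact lt_of_lt_of_le h1 (Cn_max f P hP ℓ k U hU h2)

lemma adm_par {ℓ k : ℕ} (h : Adm f P (ℓ+1) k) : Adm f P ℓ (par k) := by
  obtain ⟨U, hU, h1, h2⟩ := h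
  obtain ⟨hpb1, hpb2⟩ := par_bounds k
  have hps' : (0:ℝ) < 2^ℓ := by positivity
  have hcast1 : (k:ℝ) ≤ 2 * (par k : ℝ) := by exact_mod_cast hpb1
  have hcast2 : 2 * (par k : ℝ) ≤ (k:ℝ) + 1 := by exact_mod_cast hpb2
  refine ⟨U, hU, ?_, ?_⟩
  · have e : ((par k : ℝ) - 1)/2^ℓ ≤ ((k:ℝ) - 1)/2^(ℓ+1) := by
      rw [pow_succ, div_le_div_iff₀ hps' (by positivity)]
      have hmul : (2 * (par k:ℝ) - 2) * 2^ℓ ≤ ((k:ℝ) - 1) * 2^ℓ :=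
        mul_le_mul_of_nonneg_right (by linarith) hps'.le
      nlinarith
    exact lt_of_le_of_lt e h1
  · have e : (k:ℝ)/2^(ℓ+1) ≤ (par k : ℝ)/2^ℓ := by
      rw [pow_succ, div_le_div_iff₀ (by positivity) hps']
      have hmul : (k:ℝ) * 2^ℓ ≤ 2 * (par k:ℝ) * 2^ℓ :=
        mul_le_mul_of_nonneg_right (by linarith) hps'.le
      nlinarith
    exact h2.trans e

/-- mass of `Cn (ℓ+1) k` is at most that of its parent net set. -/
lemma cn_par_mono {ℓ k : ℕ} : mass P (Cn f P hP (ℓ+1) k) ≤ mass P (Cn f P hP ℓ (par k)) := by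
  apply Cn_max f P hP ℓ (par k) _ (Cn_up f P hP (ℓ+1) k)
  obtain ⟨hpb1, _⟩ := par_bounds k
  have hcast1 : (k:ℝ) ≤ 2 * (par k : ℝ) := by exact_mod_cast hpb1
  calc mass P (Cn f P hP (ℓ+1) k) ≤ (k:ℝ)/2^(ℓ+1) := Cn_mass_le f P hP (ℓ+1) k
  _ ≤ (par k : ℝ)/2^ℓ := by
      rw [pow_succ]
      rw [div_le_div_iff₀ (by positivity) (by positivity)]
      nlinarith [pow_pos (show (0:ℝ) < 2 by norm_num) ℓ]

/-- The increment set between a net set at level `ℓ+1` and its parent at level `ℓ`. -/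
noncomputable def Inc (ℓ k : ℕ) : Set (List A) :=
  Cn f P hP ℓ (par k) \ Cn f P hP (ℓ+1) k

lemma mass_diff_of_le {S T : Set (List A)} (hS : IsUp f S) (hT : IsUp f T)
    (h : mass P T ≤ mass P S) : mass P (S \ T) = mass P S - mass P T := by
  have hnull : rho P (T \ S) = 0 := sand f P hP hT hS h
  have h1 := mass_inter_add_diff P hP S T
  have h2 := mass_inter_add_diff P hP T S
  have h3 : mass P (T \ S) = 0 := by unfold mass; rw [hnull]; simp
  rw [h3, add_zero] at h2
  rw [Set.inter_comm] at h2
  linarith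

lemma cnt_eq_of_le (n : ℕ) {v : Fin n → List A} (hv : ∀ i, v i ∉ Zset P)
    {S T : Set (List A)} (hS : IsUp f S) (hT : IsUp f T) (h : mass P T ≤ mass P S) :
    cntR n v S = cntR n v T + cntR n v (S \ T) := by
  have hnull : rho P (T \ S) = 0 := sand f P hP hT hS h
  have h1 := cntR_split n v S T
  have h2 := cntR_split n v T S
  have h3 : cntR n v (T \ S) = 0 := cntR_null P n hP hv hnull
  rw [h3, add_zero] at h2
  rw [Set.inter_comm] at h2
  linarith

lemma inc_mass_le {ℓ k : ℕ} (h : Adm f P (ℓ+1) k) :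
    mass P (Inc f P hP ℓ k) ≤ 2 * (1/2)^(ℓ+1) := by
  have hmono := cn_par_mono f P hP (ℓ := ℓ) (k := k)
  rw [Inc, mass_diff_of_le f P hP (Cn_up f P hP ℓ (par k)) (Cn_up f P hP (ℓ+1) k) hmono]
  have h1 := Cn_mass_le f P hP ℓ (par k)
  have h2 := adm_mass_lt f P hP h
  obtain ⟨_, hpb2⟩ := par_bounds k
  have hcast2 : 2 * (par k : ℝ) ≤ (k:ℝ) + 1 := by exact_mod_cast hpb2
  have hps : (0:ℝ) < 2^(ℓ+1) := by positivity
  have hps' : (0:ℝ) < 2^ℓ := by positivity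
  have e1 : (par k : ℝ)/2^ℓ ≤ ((k:ℝ)+1)/2^(ℓ+1) := by
    rw [pow_succ, div_le_div_iff₀ hps' (by positivity)]
    have hmul : (par k : ℝ) * 2^ℓ * 2 ≤ ((k:ℝ)+1) * 2^ℓ :=
      (by nlinarith : (par k : ℝ) * 2^ℓ * 2 ≤ ((k:ℝ)+1) * 2^ℓ)
    nlinarith
  have e3 : (2:ℝ) * (1/2)^(ℓ+1) = 2/2^(ℓ+1) := by
    rw [one_div, inv_pow]
    field_simp
  have e4 : ((k:ℝ)+1)/2^(ℓ+1) - ((k:ℝ)-1)/2^(ℓ+1) = 2/2^(ℓ+1) := by ring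
  rw [e3]
  linarith [h1.trans e1]

open Classical in
/-- The bad events: at level 0 plain deviation of the net sets, at level `ℓ+1`
deviation of the increment sets. Only admissible indices carry events. -/
noncomputable def Ev (ε : ℝ) (n : ℕ) (ℓ k : ℕ) : Set (Fin n → List A) :=
  if Adm f P ℓ k then
    (match ℓ with
     | 0 => {v | ¬ |cntR n v (Cn f P hP 0 k) - n * mass P (Cn f P hP 0 k)| ≤ n * bet ε 0}
     | (l+1) =>
        {v | ¬ |cntR n v (Inc f P hP l k) - n * mass P (Inc f P hP l k)| ≤ n * bet ε (l+1)})
  else ∅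

lemma cn_dev (ε : ℝ) (n : ℕ) {v : Fin n → List A} (hv : ∀ i, v i ∉ Zset P) {L : ℕ}
    (hEv : ∀ ℓ, ℓ ≤ L → ∀ k, k ≤ 2^ℓ → v ∉ Ev f P hP ε n ℓ k) :
    ∀ ℓ, ℓ ≤ L → ∀ k, k ≤ 2^ℓ → Adm f P ℓ k →
      |cntR n v (Cn f P hP ℓ k) - n * mass P (Cn f P hP ℓ k)| ≤ n * gam ε ℓ := by
  intro ℓ
  induction ℓ with
  | zero =>
    intro hL k hk hadm
    have h := hEv 0 hL k hk
    rw [Ev, if_pos hadm] at h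
    simp only [Set.mem_setOf_eq, not_not] at h
    rw [gam_zero]
    exact h
  | succ l ih =>
    intro hL k hk hadm
    have hpar_adm := adm_par f P hP hadm
    have hpark : par k ≤ 2^l := par_le hk
    have hdev_par := ih (by omega) (par k) hpark hpar_adm
    have h := hEv (l+1) hL k hk
    rw [Ev, if_pos hadm] at h
    simp only [Set.mem_setOf_eq, not_not] at h
    have hmono := cn_par_mono f P hP (ℓ := l) (k := k)
    have hcnt := cnt_eq_of_le f P hP n hv (Cn_up f P hP l (par k)) (Cn_up f P hP (l+1) k) hmono
    have hmass := mass_diff_of_le f P hP (Cn_up f P hP l (par k)) (Cn_up f P hP (l+1) k) hmono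
    rw [gam_succ]
    unfold Inc at h
    have habs : |(cntR n v (Cn f P hP l (par k)) - (n:ℝ) * mass P (Cn f P hP l (par k)))
        - (cntR n v (Cn f P hP l (par k) \ Cn f P hP (l+1) k)
          - n * mass P (Cn f P hP l (par k) \ Cn f P hP (l+1) k))|
        ≤ n * gam ε l + n * bet ε (l+1) := le_trans (abs_sub _ _) (add_le_add hdev_par h)
    have heq : cntR n v (Cn f P hP (l+1) k) - (n:ℝ) * mass P (Cn f P hP (l+1) k)
        = (cntR n v (Cn f P hP l (par k)) - (n:ℝ) * mass P (Cn f P hP l (par k)))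
        - (cntR n v (Cn f P hP l (par k) \ Cn f P hP (l+1) k)
          - n * mass P (Cn f P hP l (par k) \ Cn f P hP (l+1) k)) := by
      unfold Inc at hmass
      rw [hcnt, hmass]
      ring
    rw [heq]
    linarith [habs]

lemma up_dev_upper (ε : ℝ) (n : ℕ) {v : Fin n → List A} (hv : ∀ i, v i ∉ Zset P) {L : ℕ}
    (hEv : ∀ ℓ, ℓ ≤ L → ∀ k, k ≤ 2^ℓ → v ∉ Ev f P hP ε n ℓ k)
    (U : Set (List A)) (hU : IsUp f U) :
    cntR n v U ≤ n * mass P U + n * (gam ε L + (1/2)^L) := by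
  set m := mass P U with hm
  have hm0 : 0 ≤ m := mass_nonneg P U
  have hm1 : m ≤ 1 := mass_le_one P hP U
  have hps : (0:ℝ) < 2^L := by positivity
  set k := ⌈m * 2^L⌉₊ with hk
  have hk2 : k ≤ 2^L := by
    rw [hk]
    apply Nat.ceil_le.mpr
    push_cast
    nlinarith
  have hupper : m ≤ (k:ℝ)/2^L := by
    rw [le_div_iff₀ hps]
    exact Nat.le_ceil _
  have hlower : ((k:ℝ)-1)/2^L < m := by
    rw [div_lt_iff₀ hps]
    have := Nat.ceil_lt_add_one (show (0:ℝ) ≤ m * 2^L by positivity)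
    rw [← hk] at this
    linarith
  have hadm : Adm f P L k := ⟨U, hU, hlower, hupper⟩
  have hmassle : m ≤ mass P (Cn f P hP L k) := Cn_max f P hP L k U hU hupper
  have hcnt := cnt_eq_of_le f P hP n hv (Cn_up f P hP L k) hU hmassle
  have hcntle : cntR n v U ≤ cntR n v (Cn f P hP L k) := by
    rw [hcnt]
    linarith [cntR_nonneg n v (Cn f P hP L k \ U)]
  have hdev := cn_dev f P hP ε n hv hEv L (le_refl L) k hk2 hadm
  have hcn_upper : mass P (Cn f P hP L k) < m + (1/2)^L := by
    calc mass P (Cn f P hP L k) ≤ (k:ℝ)/2^L := Cn_mass_le f P hP L k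
    _ < m + (1/2)^L := by
        rw [one_div, inv_pow, ← one_div]
        rw [div_lt_iff₀ hps]
        have := Nat.ceil_lt_add_one (show (0:ℝ) ≤ m * 2^L by positivity)
        rw [← hk] at this
        have h2 : (m + 1/2^L) * 2^L = m * 2^L + 1 := by
          field_simp
        rw [h2]
        exact this
  have habs := abs_le.mp hdev |>.1
  have hn0 : (0:ℝ) ≤ (n:ℝ) := Nat.cast_nonneg n
  have : cntR n v (Cn f P hP L k) ≤ n * mass P (Cn f P hP L k) + n * gam ε L := by
    linarith [abs_le.mp hdev |>.2]
  calc cntR n v U ≤ cntR n v (Cn f P hP L k) := hcntle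
  _ ≤ n * mass P (Cn f P hP L k) + n * gam ε L := this
  _ ≤ n * (m + (1/2)^L) + n * gam ε L := by
      have := mul_le_mul_of_nonneg_left hcn_upper.le hn0
      linarith
  _ = n * m + n * (gam ε L + (1/2)^L) := by ring

lemma ev_bound (ε : ℝ) (hε : 0 < ε) (hε1 : ε ≤ 1) (n : ℕ) (μ : Measure (ℕ → List A))
    (hμ : IsIIDProduct P μ) {J : ℕ} (hJ2 : ε * 2^J ≤ 16) (ℓ k : ℕ) (hℓ : ℓ ≤ J) :
    nu n μ (Ev f P hP ε n ℓ k)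
      ≤ 2 * ENNReal.ofReal (Real.exp (-((n:ℝ) * ε^2/3200 * (25/18)^ℓ))) := by
  classical
  have hn0 : (0:ℝ) ≤ (n:ℝ) := Nat.cast_nonneg n
  have hKle : ∀ S : Set (List A), ∀ q : ℝ, 0 < q → mass P S ≤ q →
      ε^2/3200 * (25/18)^ℓ ≤ min ((bet ε ℓ)^2/(4*q)) (bet ε ℓ / 2) →
      nu n μ {v | ¬ |cntR n v S - n * mass P S| ≤ n * bet ε ℓ}
        ≤ 2 * ENNReal.ofReal (Real.exp (-((n:ℝ) * ε^2/3200 * (25/18)^ℓ))) := by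
    intro S q hq hSq hmin
    refine le_trans (chernoff_tail P n μ hP hμ S (bet_pos hε ℓ) hq hSq) ?_
    apply mul_le_mul_of_nonneg_left _ (by norm_num)
    apply ENNReal.ofReal_le_ofReal
    apply Real.exp_le_exp.mpr
    have := mul_le_mul_of_nonneg_left hmin hn0
    have heq : (n:ℝ) * (ε^2/3200 * (25/18)^ℓ) = (n:ℝ) * ε^2/3200 * (25/18)^ℓ := by ring
    linarith
  match ℓ with
  | 0 =>
    rw [Ev]
    by_cases hadm : Adm f P 0 k
    · rw [if_pos hadm]
      apply hKle (Cn f P hP 0 k) 2 (by norm_num)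
        (le_trans (mass_le_one P hP _) (by norm_num))
      have e1 : (bet ε 0)^2/(4*2) = ε^2/3200 := by
        unfold bet
        ring
      have e2 : ε^2/3200 ≤ bet ε 0 / 2 := by
        unfold bet
        nlinarith
      have e3 : ((25:ℝ)/18)^(0:ℕ) = 1 := pow_zero _
      rw [e3, mul_one]
      exact le_min (le_of_eq e1.symm) e2
    · rw [if_neg hadm]; simp
  | (l+1) =>
    rw [Ev]
    by_cases hadm : Adm f P (l+1) k
    · rw [if_pos hadm]
      set m := l + 1 with hm
      have hq : (0:ℝ) < 2*(1/2)^m := by positivity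
      apply hKle (Inc f P hP l k) (2*(1/2)^m) hq (inc_mass_le f P hP hadm)
      have hpow56 : (0:ℝ) < ((5:ℝ)/6)^m := by positivity
      have e1 : (bet ε m)^2/(4*(2*(1/2)^m)) = ε^2/3200 * (25/18)^m := by
        unfold bet
        rw [mul_pow]
        rw [show (((5:ℝ)/6)^m) ^ 2 = ((25:ℝ)/36)^m by
          rw [← pow_mul, mul_comm, pow_mul]; norm_num]
        rw [show ((25:ℝ)/18)^m = ((25:ℝ)/36)^m * 2^m by rw [← mul_pow]; norm_num]
        rw [show ((1:ℝ)/2)^m = 1/2^m by rw [one_div_pow]]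
        have h2m : (0:ℝ) < 2^m := by positivity
        field_simp
        ring
      have e2 : ε^2/3200 * (25/18)^m ≤ bet ε m / 2 := by
        have h53 : ε * ((5:ℝ)/3)^m ≤ 80 := by
          have ha : ((5:ℝ)/3)^m ≤ 2^m :=
            pow_le_pow_left₀ (by norm_num) (by norm_num) m
          have hb : (2:ℝ)^m ≤ 2^J :=
            pow_le_pow_right₀ (by norm_num) (by omega)
          have : ε * ((5:ℝ)/3)^m ≤ ε * 2^J := by
            apply mul_le_mul_of_nonneg_left (ha.trans hb) hε.le
          linarith
        have hsplit : ((25:ℝ)/18)^m = ((5:ℝ)/6)^m * ((5:ℝ)/3)^m := by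
          rw [← mul_pow]; norm_num
        unfold bet
        rw [hsplit]
        have h53pos : (0:ℝ) ≤ ((5:ℝ)/3)^m := by positivity
        have hkey2 : (ε * ((5:ℝ)/6)^m) * (ε * ((5:ℝ)/3)^m) ≤ (ε * ((5:ℝ)/6)^m) * 80 :=
          mul_le_mul_of_nonneg_left h53 (by positivity)
        nlinarith [hkey2]
      exact le_min (le_of_eq e1.symm) e2
    · rw [if_neg hadm]; simp


end Chain


lemma geom_half_le (m : ℕ) : ∑ ℓ ∈ Finset.range m, ((1:ℝ)/2)^ℓ ≤ 2 := by
  have h : ((1:ℝ)/2) ≠ 1 := by norm_num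
  rw [geom_sum_eq h]
  have hp : (0:ℝ) < (1/2)^m := by positivity
  have hd : ((1:ℝ)/2 - 1) = -(1/2) := by norm_num
  rw [hd, div_le_iff_of_neg (by norm_num : -(1/2 : ℝ) < 0)]
  linarith

lemma sum_bound {K : ℝ} (hK : 8 ≤ K) (J : ℕ) :
    ∑ ℓ ∈ Finset.range (J+1), ((2:ℝ)^ℓ + 1) * 2 * Real.exp (-(K * (25/18)^ℓ))
      ≤ 8 * Real.exp (-K) := by
  have hK0 : (0:ℝ) ≤ K := by linarith
  have hterm : ∀ ℓ : ℕ, ((2:ℝ)^ℓ + 1) * 2 * Real.exp (-(K * (25/18)^ℓ))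
      ≤ 4 * Real.exp (-K) * (1/2)^ℓ := by
    intro ℓ
    have h1 : (1:ℝ) + ℓ * (7/18) ≤ (25/18)^ℓ := by
      have h := one_add_mul_le_pow (by norm_num : (-2:ℝ) ≤ 7/18) ℓ
      have he : ((1:ℝ) + 7/18) = 25/18 := by norm_num
      rw [he] at h
      linarith [h]
    have hexp : Real.exp (-(K * (25/18)^ℓ)) ≤ Real.exp (-K) * Real.exp (-(7/18*K))^ℓ := by
      rw [← Real.exp_nat_mul, ← Real.exp_add]
      apply Real.exp_le_exp.mpr
      have h2 := mul_le_mul_of_nonneg_left h1 hK0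
      nlinarith
    have hhalf : (2:ℝ) * Real.exp (-(7/18*K)) ≤ 1/2 := by
      have h4 : (4:ℝ) ≤ Real.exp (7/18*K) := by
        have := Real.add_one_le_exp (7/18*K)
        nlinarith
      have hep : (0:ℝ) < Real.exp (7/18*K) := Real.exp_pos _
      rw [Real.exp_neg]
      have hinv : (Real.exp (7/18*K))⁻¹ ≤ 1/4 := by
        rw [inv_le_comm₀ hep (by norm_num)]
        linarith
      linarith
    have hcount : ((2:ℝ)^ℓ + 1) * 2 ≤ 4 * 2^ℓ := by
      have h1p : (1:ℝ) ≤ 2^ℓ := one_le_pow₀ (by norm_num)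
      nlinarith
    have hexp0 : (0:ℝ) ≤ Real.exp (-(K * (25/18)^ℓ)) := (Real.exp_pos _).le
    calc ((2:ℝ)^ℓ+1)*2*Real.exp (-(K*(25/18)^ℓ))
        ≤ (4*2^ℓ) * (Real.exp (-K) * Real.exp (-(7/18*K))^ℓ) := by
          apply mul_le_mul hcount hexp hexp0 (by positivity)
    _ = 4 * Real.exp (-K) * (2 * Real.exp (-(7/18*K)))^ℓ := by rw [mul_pow]; ring
    _ ≤ 4 * Real.exp (-K) * (1/2)^ℓ := by
        apply mul_le_mul_of_nonneg_left (pow_le_pow_left₀ (by positivity) hhalf ℓ) (by positivity)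
  calc ∑ ℓ ∈ Finset.range (J+1), ((2:ℝ)^ℓ + 1) * 2 * Real.exp (-(K * (25/18)^ℓ))
      ≤ ∑ ℓ ∈ Finset.range (J+1), 4 * Real.exp (-K) * (1/2)^ℓ :=
        Finset.sum_le_sum (fun ℓ _ => hterm ℓ)
  _ = 4 * Real.exp (-K) * ∑ ℓ ∈ Finset.range (J+1), ((1:ℝ)/2)^ℓ := by rw [← Finset.mul_sum]
  _ ≤ 4 * Real.exp (-K) * 2 := by
        apply mul_le_mul_of_nonneg_left (geom_half_le (J+1)) (by positivity)
  _ = 8 * Real.exp (-K) := by ring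

section Chain2

variable (f : List A → ℝ) (P : List A → ℝ) (hP : IsStochastic P)

lemma evU_bound (ε : ℝ) (hε : 0 < ε) (hε1 : ε ≤ 1) (n : ℕ) (μ : Measure (ℕ → List A))
    (hμ : IsIIDProduct P μ) {J : ℕ} (hJ2 : ε * 2^J ≤ 16) (hK : 8 ≤ (n:ℝ)*ε^2/3200) :
    nu n μ (⋃ ℓ ∈ Finset.range (J+1), ⋃ k ∈ Finset.range (2^ℓ+1), Ev f P hP ε n ℓ k)
      ≤ ENNReal.ofReal (8 * Real.exp (-((n:ℝ)*ε^2/3200))) := by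
  classical
  set K := (n:ℝ)*ε^2/3200 with hKdef
  calc nu n μ (⋃ ℓ ∈ Finset.range (J+1), ⋃ k ∈ Finset.range (2^ℓ+1), Ev f P hP ε n ℓ k)
      ≤ ∑ ℓ ∈ Finset.range (J+1), nu n μ (⋃ k ∈ Finset.range (2^ℓ+1), Ev f P hP ε n ℓ k) :=
        measure_biUnion_finset_le _ _
  _ ≤ ∑ ℓ ∈ Finset.range (J+1), ∑ k ∈ Finset.range (2^ℓ+1), nu n μ (Ev f P hP ε n ℓ k) :=
        Finset.sum_le_sum (fun ℓ _ => measure_biUnion_finset_le _ _)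
  _ ≤ ∑ ℓ ∈ Finset.range (J+1),
        ENNReal.ofReal (((2:ℝ)^ℓ + 1) * 2 * Real.exp (-(K * (25/18)^ℓ))) := by
      apply Finset.sum_le_sum
      intro ℓ hℓ
      have hℓJ : ℓ ≤ J := by
        have := Finset.mem_range.mp hℓ
        omega
      calc ∑ k ∈ Finset.range (2^ℓ+1), nu n μ (Ev f P hP ε n ℓ k)
          ≤ ∑ _k ∈ Finset.range (2^ℓ+1),
              2 * ENNReal.ofReal (Real.exp (-((n:ℝ) * ε^2/3200 * (25/18)^ℓ))) :=
            Finset.sum_le_sum (fun k _ => ev_bound f P hP ε hε hε1 n μ hμ hJ2 ℓ k hℓJ)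
      _ = (2^ℓ+1) • (2 * ENNReal.ofReal (Real.exp (-((n:ℝ) * ε^2/3200 * (25/18)^ℓ)))) := by
            rw [Finset.sum_const, Finset.card_range]
      _ = ENNReal.ofReal (((2:ℝ)^ℓ + 1) * 2 * Real.exp (-(K * (25/18)^ℓ))) := by
            rw [nsmul_eq_mul]
            rw [← ENNReal.ofReal_natCast (2^ℓ+1), ← ENNReal.ofReal_ofNat 2,
              ← ENNReal.ofReal_mul (by norm_num), ← ENNReal.ofReal_mul (by positivity)]
            congr 1
            push_cast
            rw [hKdef]
            ring_nf
  _ = ENNReal.ofReal (∑ ℓ ∈ Finset.range (J+1), ((2:ℝ)^ℓ + 1) * 2 * Real.exp (-(K * (25/18)^ℓ))) := by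
      rw [ENNReal.ofReal_sum_of_nonneg]
      intro ℓ _
      positivity
  _ ≤ ENNReal.ofReal (8 * Real.exp (-K)) :=
      ENNReal.ofReal_le_ofReal (sum_bound hK J)

end Chain2

section Det

variable (P : List A → ℝ) (hP : IsStochastic P)

/-- Two-sided deviation bound for `enc`-up-sets on the good event. -/
lemma dev_up (ε : ℝ) (n : ℕ) {v : Fin n → List A} (hv : ∀ i, v i ∉ Zset P) {J : ℕ}
    (hE1 : ∀ ℓ, ℓ ≤ J → ∀ k, k ≤ 2^ℓ → v ∉ Ev (enc (A := A)) P hP ε n ℓ k)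
    (hE2 : ∀ ℓ, ℓ ≤ J → ∀ k, k ≤ 2^ℓ → v ∉ Ev (fun w : List A => - enc w) P hP ε n ℓ k)
    (U : Set (List A)) (hU : IsUp (enc (A := A)) U) :
    |cntR n v U - n * mass P U| ≤ n * (gam ε J + (1/2)^J) := by
  have hupper := up_dev_upper (enc (A := A)) P hP ε n hv hE1 U hU
  have hUc : IsUp (fun w : List A => - enc w) Uᶜ := by
    intro x hx y hxy
    have hxy' : - enc x ≤ - enc y := hxy
    intro hyU
    exact hx (hU hyU (by linarith))
  have hlower := up_dev_upper (fun w : List A => - enc w) P hP ε n hv hE2 Uᶜ hUc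
  rw [mass_compl P hP] at hlower
  have hcompl := cntR_add_compl n v U
  have hn0 : (0:ℝ) ≤ (n:ℝ) := Nat.cast_nonneg n
  rw [abs_le]
  constructor
  · -- lower bound on cntR from the complement bound
    nlinarith
  · nlinarith

/-- The main deterministic conclusion on the good event. -/
lemma main_det (ε : ℝ) (hε : 0 < ε) (n : ℕ) {v : Fin n → List A}
    (hv : ∀ i, v i ∉ Zset P) {J : ℕ} (hJ1 : ((1:ℝ)/2)^J ≤ ε/8)
    (hE1 : ∀ ℓ, ℓ ≤ J → ∀ k, k ≤ 2^ℓ → v ∉ Ev (enc (A := A)) P hP ε n ℓ k)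
    (hE2 : ∀ ℓ, ℓ ≤ J → ∀ k, k ≤ 2^ℓ → v ∉ Ev (fun w : List A => - enc w) P hP ε n ℓ k)
    (w : List A) :
    |cntR n v (pre w) - n * mass P (pre w)| ≤ n * ε := by
  set U1 := {v' : List A | enc w ≤ enc v'} with hU1def
  set U2 := {v' : List A | enc w + (1 / bb A)^w.length ≤ enc v'} with hU2def
  have hU1 : IsUp (enc (A := A)) U1 := by
    intro x hx y hxy
    simp only [hU1def, Set.mem_setOf_eq] at hx ⊢
    linarith
  have hU2 : IsUp (enc (A := A)) U2 := by
    intro x hx y hxy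
    simp only [hU2def, Set.mem_setOf_eq] at hx ⊢
    linarith
  have hsub : U2 ⊆ U1 := by
    intro x hx
    simp only [hU1def, hU2def, Set.mem_setOf_eq] at hx ⊢
    have hp : (0:ℝ) < (1 / bb A)^w.length := by
      have := bb_pos (A := A)
      positivity
    linarith
  have hpre : pre w = U1 \ U2 := by
    ext v'
    rw [pre, Set.mem_setOf_eq, Set.mem_diff]
    rw [prefix_iff_enc]
    simp only [hU1def, hU2def, Set.mem_setOf_eq]
  have hcnt : cntR n v (pre w) = cntR n v U1 - cntR n v U2 := by
    have := cntR_split n v U1 U2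
    rw [Set.inter_eq_self_of_subset_right hsub] at this
    rw [hpre]
    linarith
  have hmass : mass P (pre w) = mass P U1 - mass P U2 := by
    rw [hpre]
    exact mass_diff P hP hsub
  have hd1 := dev_up P hP ε n hv hE1 hE2 U1 hU1
  have hd2 := dev_up P hP ε n hv hE1 hE2 U2 hU2
  have habs : |(cntR n v U1 - n * mass P U1) - (cntR n v U2 - n * mass P U2)|
      ≤ n * (gam ε J + (1/2)^J) + n * (gam ε J + (1/2)^J) :=
    le_trans (abs_sub _ _) (add_le_add hd1 hd2)
  have heq : cntR n v (pre w) - (n:ℝ) * mass P (pre w)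
      = (cntR n v U1 - n * mass P U1) - (cntR n v U2 - n * mass P U2) := by
    rw [hcnt, hmass]; ring
  rw [heq]
  refine le_trans habs ?_
  have hg := gam_le (ε := ε) hε.le J
  have hn0 : (0:ℝ) ≤ (n:ℝ) := Nat.cast_nonneg n
  nlinarith

end Det

lemma exists_J {ε : ℝ} (hε : 0 < ε) (hε1 : ε ≤ 1) :
    ∃ J : ℕ, ((1:ℝ)/2)^J ≤ ε/8 ∧ ε * 2^J ≤ 16 := by
  classical
  have hex : ∃ J : ℕ, ((1:ℝ)/2)^J ≤ ε/8 := by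
    obtain ⟨N, hN⟩ := exists_pow_lt_of_lt_one (show (0:ℝ) < ε/8 by positivity)
      (show (1:ℝ)/2 < 1 by norm_num)
    exact ⟨N, hN.le⟩
  have hJ1 : ((1:ℝ)/2)^(Nat.find hex) ≤ ε/8 := Nat.find_spec hex
  refine ⟨Nat.find hex, hJ1, ?_⟩
  have hJpos : Nat.find hex ≠ 0 := by
    intro h0
    rw [h0] at hJ1
    simp at hJ1
    linarith
  rcases Nat.exists_eq_succ_of_ne_zero hJpos with ⟨J', hJ'⟩
  have hmin : ¬ ((1:ℝ)/2)^J' ≤ ε/8 := Nat.find_min hex (by omega)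
  push_neg at hmin
  rw [hJ']
  have h2 : (2:ℝ)^(J'+1) = 2 / ((1:ℝ)/2)^J' := by
    rw [one_div, inv_pow, pow_succ]
    field_simp
  rw [h2]
  have hp : (0:ℝ) < ((1:ℝ)/2)^J' := by positivity
  have hlt : 2 / ((1:ℝ)/2)^J' ≤ 2/(ε/8) :=
    div_le_div_of_nonneg_left (by norm_num) (by positivity) hmin.le
  have hmul : ε * (2 / ((1:ℝ)/2)^J') ≤ ε * (2/(ε/8)) :=
    mul_le_mul_of_nonneg_left hlt hε.le
  have hfin : ε * (2/(ε/8)) = 16 := by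
    field_simp
    norm_num
  linarith


lemma emp_eq_cnt (ω : ℕ → List A) (n : ℕ) (X : Set (List A)) :
    emp ω n X = cntR n (proj n ω) X / n := by
  rw [emp, cntR]
  congr 1
  rw [← Fin.sum_univ_eq_sum_range (fun i => X.indicator (fun _ => (1:ℝ)) (ω i)) n]
  rfl

lemma tsum_eq_mass (P : List A → ℝ) (hP : IsStochastic P) (s : Set (List A)) :
    (∑' v : s, P (v : List A)) = mass P s := by
  unfold mass
  rw [rho_apply']
  rw [ENNReal.tsum_toReal_eq (fun _ => ENNReal.ofReal_ne_top)]
  exact tsum_congr fun x => (ENNReal.toReal_ofReal (hP.1 _)).symm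

lemma mu_univ_one {P : List A → ℝ} {μ : Measure (ℕ → List A)} (hμ : IsIIDProduct P μ) :
    μ Set.univ = 1 := by
  have h := hμ ∅ (fun _ => Set.univ)
  simpa using h

end S19

theorem statement19 :
    ∃ c > (0 : ℝ), ∀ (A : Type) (_ : Fintype A) (_ : Nonempty A) (P : List A → ℝ),
      IsStochastic P → ∀ ε > (0 : ℝ), ∀ δ ∈ Set.Ioo (0 : ℝ) 1, ∀ n : ℕ,
        c ^ 2 / ε ^ 2 * (2 - Real.log (δ / 4)) ≤ (n : ℝ) →
        ∀ μ : Measure (ℕ → List A), IsIIDProduct P μ →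
          ENNReal.ofReal (1 - δ) <
            μ {ω | ∀ w : List A, |emp ω n (pre w) - ∑' v : pre w, P (v : List A)| ≤ ε} := by
  classical
  refine ⟨3200, by norm_num, ?_⟩
  intro A fA nA P hP ε hε δ hδ n hn μ hμ
  haveI := fA
  haveI := nA
  obtain ⟨hδ0, hδ1⟩ := hδ
  -- basic positivity facts
  have hlog4 : (0:ℝ) ≤ Real.log 4 := Real.log_nonneg (by norm_num)
  have hlogδ : Real.log δ < 0 := Real.log_neg hδ0 hδ1
  have hlogsplit : Real.log (δ/4) = Real.log δ - Real.log 4 :=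
    Real.log_div (ne_of_gt hδ0) (by norm_num)
  have hfac : (2:ℝ) < 2 - Real.log (δ/4) := by
    rw [hlogsplit]
    linarith
  have hn1 : 1 ≤ n := by
    by_contra hcon
    push_neg at hcon
    interval_cases n
    have hpos : (0:ℝ) < 3200 ^ 2 / ε ^ 2 * (2 - Real.log (δ / 4)) := by
      have h1 : (0:ℝ) < 3200^2/ε^2 := by positivity
      nlinarith
    simp only [Nat.cast_zero] at hn
    linarith
  have hncast : (1:ℝ) ≤ (n:ℝ) := by exact_mod_cast hn1
  have hnpos : (0:ℝ) < (n:ℝ) := by linarith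
  -- the tuple-level good set
  set G : Set (Fin n → List A) :=
    {v | ∀ w : List A, |S19.cntR n v (pre w) - n * S19.mass P (pre w)| ≤ n * ε} with hGdef
  have hTG : {ω : ℕ → List A | ∀ w : List A, |emp ω n (pre w) - ∑' v : pre w, P (v : List A)| ≤ ε}
      = S19.proj n ⁻¹' G := by
    ext ω
    simp only [Set.mem_setOf_eq, Set.mem_preimage, hGdef]
    apply forall_congr'
    intro w
    rw [S19.emp_eq_cnt, S19.tsum_eq_mass P hP]
    rw [div_sub' (ne_of_gt hnpos)]
    rw [abs_div, abs_of_pos hnpos, div_le_iff₀ hnpos]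
    rw [mul_comm ε ((n:ℝ))]
  have hμT : μ {ω : ℕ → List A | ∀ w : List A,
      |emp ω n (pre w) - ∑' v : pre w, P (v : List A)| ≤ ε} = S19.nu n μ G := by
    rw [hTG, S19.nu, Measure.map_apply (S19.measurable_proj n) (S19.measT n G)]
  rw [hμT]
  -- trivial case ε > 1
  rcases le_or_gt ε 1 with hε1 | hε1
  swap
  · have hGuniv : G = Set.univ := by
      ext v
      simp only [hGdef, Set.mem_setOf_eq, Set.mem_univ, iff_true]
      intro w
      have h1 : 0 ≤ S19.cntR n v (pre w) := S19.cntR_nonneg n v _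
      have h2 : S19.cntR n v (pre w) ≤ n := S19.cntR_le n v _
      have h3 : 0 ≤ S19.mass P (pre w) := S19.mass_nonneg P _
      have h4 : S19.mass P (pre w) ≤ 1 := S19.mass_le_one P hP _
      rw [abs_le]
      constructor <;> nlinarith
    rw [hGuniv]
    have : S19.nu n μ Set.univ = 1 := S19.nu_univ P n μ hμ
    rw [this]
    exact ENNReal.ofReal_lt_one.mpr (by linarith)
  -- main case
  obtain ⟨J, hJ1, hJ2⟩ := S19.exists_J hε hε1
  set K := (n:ℝ) * ε^2/3200 with hKdef
  have hKlb : 3200 * (2 - Real.log (δ/4)) ≤ K := by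
    have hmul := mul_le_mul_of_nonneg_right hn (show (0:ℝ) ≤ ε^2/3200 by positivity)
    have heq : 3200 ^ 2 / ε ^ 2 * (2 - Real.log (δ / 4)) * (ε^2/3200)
        = 3200 * (2 - Real.log (δ/4)) := by
      field_simp
    rw [heq] at hmul
    rw [hKdef]
    calc 3200 * (2 - Real.log (δ/4)) ≤ (n:ℝ) * (ε^2/3200) := hmul
    _ = (n:ℝ) * ε^2/3200 := by ring
  have hK8 : (8:ℝ) ≤ K := by nlinarith
  have hKfin : 16 * Real.exp (-K) ≤ δ/2 := by
    have hlog32 : Real.log 32 ≤ 31 := by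
      have := Real.log_le_sub_one_of_pos (show (0:ℝ) < 32 by norm_num)
      linarith
    have hKge : Real.log 32 - Real.log δ ≤ K := by
      rw [hlogsplit] at hKlb
      nlinarith
    have hexp : Real.exp (-K) ≤ δ/32 := by
      have h1 : Real.exp (-K) ≤ Real.exp (Real.log δ - Real.log 32) :=
        Real.exp_le_exp.mpr (by linarith)
      rw [Real.exp_sub, Real.exp_log hδ0, Real.exp_log (show (0:ℝ) < 32 by norm_num)] at h1
      linarith
    linarith
  -- the bad events
  set Zhit : Set (Fin n → List A) := {v | ¬ ∀ i, v i ∉ S19.Zset P} with hZdef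
  set EvU1 : Set (Fin n → List A) :=
    ⋃ ℓ ∈ Finset.range (J+1), ⋃ k ∈ Finset.range (2^ℓ+1), S19.Ev (S19.enc (A := A)) P hP ε n ℓ k
    with hE1def
  set EvU2 : Set (Fin n → List A) :=
    ⋃ ℓ ∈ Finset.range (J+1), ⋃ k ∈ Finset.range (2^ℓ+1),
      S19.Ev (fun w : List A => - S19.enc w) P hP ε n ℓ k with hE2def
  have hGc : Gᶜ ⊆ Zhit ∪ EvU1 ∪ EvU2 := by
    intro v hv
    by_contra hcon
    simp only [Set.mem_union, not_or] at hcon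
    obtain ⟨⟨hz, he1⟩, he2⟩ := hcon
    apply hv
    have hzv : ∀ i, v i ∉ S19.Zset P := by
      rw [hZdef] at hz
      simpa using hz
    have hev1 : ∀ ℓ, ℓ ≤ J → ∀ k, k ≤ 2^ℓ → v ∉ S19.Ev (S19.enc (A := A)) P hP ε n ℓ k := by
      intro ℓ hℓ k hk hmem
      apply he1
      rw [hE1def]
      simp only [Set.mem_iUnion]
      exact ⟨ℓ, Finset.mem_range.mpr (by omega), k, Finset.mem_range.mpr (by omega), hmem⟩
    have hev2 : ∀ ℓ, ℓ ≤ J → ∀ k, k ≤ 2^ℓ →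
        v ∉ S19.Ev (fun w : List A => - S19.enc w) P hP ε n ℓ k := by
      intro ℓ hℓ k hk hmem
      apply he2
      rw [hE2def]
      simp only [Set.mem_iUnion]
      exact ⟨ℓ, Finset.mem_range.mpr (by omega), k, Finset.mem_range.mpr (by omega), hmem⟩
    intro w
    exact S19.main_det P hP ε hε n hzv hJ1 hev1 hev2 w
  have hbad : S19.nu n μ Gᶜ ≤ ENNReal.ofReal (δ/2) := by
    calc S19.nu n μ Gᶜ ≤ S19.nu n μ (Zhit ∪ EvU1 ∪ EvU2) := measure_mono hGc
    _ ≤ S19.nu n μ (Zhit ∪ EvU1) + S19.nu n μ EvU2 := measure_union_le _ _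
    _ ≤ (S19.nu n μ Zhit + S19.nu n μ EvU1) + S19.nu n μ EvU2 :=
        add_le_add_left (measure_union_le _ _) _
    _ ≤ (0 + ENNReal.ofReal (8 * Real.exp (-K))) + ENNReal.ofReal (8 * Real.exp (-K)) := by
        apply add_le_add
        apply add_le_add
        · rw [hZdef]
          exact le_of_eq (S19.nu_Zhit P n μ hP hμ)
        · rw [hE1def]
          exact S19.evU_bound _ P hP ε hε hε1 n μ hμ hJ2 hK8
        · rw [hE2def]
          exact S19.evU_bound _ P hP ε hε hε1 n μ hμ hJ2 hK8
    _ = ENNReal.ofReal (8 * Real.exp (-K)) + ENNReal.ofReal (8 * Real.exp (-K)) := by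
        rw [zero_add]
    _ = ENNReal.ofReal (16 * Real.exp (-K)) := by
        rw [← ENNReal.ofReal_add (by positivity) (by positivity)]
        congr 1
        ring
    _ ≤ ENNReal.ofReal (δ/2) := ENNReal.ofReal_le_ofReal hKfin
  -- conclude
  have hsum : (1:ℝ≥0∞) ≤ S19.nu n μ G + S19.nu n μ Gᶜ := by
    have huniv : (Set.univ : Set (Fin n → List A)) = G ∪ Gᶜ := (Set.union_compl_self G).symm
    calc (1:ℝ≥0∞) = S19.nu n μ Set.univ := (S19.nu_univ P n μ hμ).symm
    _ = S19.nu n μ (G ∪ Gᶜ) := by rw [← huniv]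
    _ ≤ S19.nu n μ G + S19.nu n μ Gᶜ := measure_union_le _ _
  have hlb : (1:ℝ≥0∞) - ENNReal.ofReal (δ/2) ≤ S19.nu n μ G := by
    apply tsub_le_iff_right.mpr
    calc (1:ℝ≥0∞) ≤ S19.nu n μ G + S19.nu n μ Gᶜ := hsum
    _ ≤ S19.nu n μ G + ENNReal.ofReal (δ/2) := add_le_add_right hbad _
  have hofr : ENNReal.ofReal (1 - δ/2) = 1 - ENNReal.ofReal (δ/2) := by
    rw [← ENNReal.ofReal_one, ← ENNReal.ofReal_sub _ (by positivity)]
  calc ENNReal.ofReal (1 - δ) < ENNReal.ofReal (1 - δ/2) := by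
        rw [ENNReal.ofReal_lt_ofReal_iff (by linarith)]
        linarith
  _ = 1 - ENNReal.ofReal (δ/2) := hofr
  _ ≤ S19.nu n μ G := hlb
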